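/- Let Y and Y′ be random variables with finitely many values on a common probability space, taking values in sets S and T respectively. Then H(Y′) − H(Y) ≥ −log₂( ∑_{y′∈T} P(Y′=y′) · ∑_{y∈S : P(Y=y)>0} P(Y′=y′, Y=y)/P(Y=y) ). -/

import Mathlib

open scoped BigOperators
open Classical

noncomputable section

/-- A finite probability space: a probability mass function on a finite type. -/
structure FinProb (Ω : Type*) [Fintype Ω] where
  p : Ω → ℝ
  nonneg : ∀ ω, 0 ≤ p ω
  sum_one : ∑ ω, p ω = 1

variable {Ω : Type*} [Fintype Ω]

/-- Probability of an event. -/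
def pr (μ : FinProb Ω) (E : Ω → Prop) : ℝ :=
  ∑ ω, if E ω then μ.p ω else 0

/-- Shannon entropy (base 2) of a random variable with finitely many values. -/
def entropy {S : Type*} (μ : FinProb Ω) (U : Ω → S) : ℝ :=
  -∑ u ∈ Finset.univ.image U,
    pr μ (fun ω => U ω = u) * Real.logb 2 (pr μ (fun ω => U ω = u))

/-- Conditional Shannon entropy `H(U | V)`. -/
def condEntropy {S T : Type*} (μ : FinProb Ω) (U : Ω → S) (V : Ω → T) : ℝ :=
  ∑ v ∈ (Finset.univ.image V).filter (fun v => 0 < pr μ (fun ω => V ω = v)),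
    pr μ (fun ω => V ω = v) *
      (-∑ u ∈ Finset.univ.image U,
        (pr μ (fun ω => U ω = u ∧ V ω = v) / pr μ (fun ω => V ω = v)) *
          Real.logb 2 (pr μ (fun ω => U ω = u ∧ V ω = v) / pr μ (fun ω => V ω = v)))

/-- Mutual information `I(U;V) = H(U) - H(U|V)`. -/
def mutualInfo {S T : Type*} (μ : FinProb Ω) (U : Ω → S) (V : Ω → T) : ℝ :=
  entropy μ U - condEntropy μ U V

/-- Expected length of a list-valued random variable. -/
def expLen {A : Type*} (μ : FinProb Ω) (Y : Ω → List A) : ℝ :=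
  ∑ ω, μ.p ω * (Y ω).length

lemma pr_nonneg (μ : FinProb Ω) (E : Ω → Prop) : 0 ≤ pr μ E := by
  apply Finset.sum_nonneg
  intro ω _
  split <;> simp [μ.nonneg ω]

lemma pr_mono (μ : FinProb Ω) {E F : Ω → Prop} (h : ∀ ω, E ω → F ω) :
    pr μ E ≤ pr μ F := by
  apply Finset.sum_le_sum
  intro ω _
  by_cases hE : E ω
  · simp [hE, h ω hE]
  · simp only [hE, if_false]
    split <;> simp [μ.nonneg ω]

lemma entropy_univ {S : Type*} [Fintype S] (μ : FinProb Ω) (U : Ω → S) :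
    entropy μ U = -∑ u : S,
      pr μ (fun ω => U ω = u) * Real.logb 2 (pr μ (fun ω => U ω = u)) := by
  unfold entropy
  congr 1
  apply Finset.sum_subset (Finset.subset_univ _)
  intro u _ hu
  have h0 : pr μ (fun ω => U ω = u) = 0 := by
    apply Finset.sum_eq_zero
    intro ω _
    have : U ω ≠ u := fun h => hu (Finset.mem_image.2 ⟨ω, Finset.mem_univ ω, h⟩)
    simp [this]
  simp [h0]

lemma concaveOn_logb : ConcaveOn ℝ (Set.Ioi 0) (Real.logb 2) := by
  have h := (strictConcaveOn_log_Ioi.concaveOn).smul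
    (c := (Real.log 2)⁻¹) (by positivity)
  convert h using 1
  any_goals rfl
  funext x
  simp [Real.logb, div_eq_inv_mul]

/-- `H(Y') − H(Y) ≥ −log₂(∑_{y'} P(Y'=y') ∑_{y : P(Y=y)>0} P(Y'=y', Y=y)/P(Y=y))`. -/
theorem stmt1 {Ω S T : Type*} [Fintype Ω] [Fintype S] [Fintype T] (μ : FinProb Ω)
    (Y : Ω → S) (Y' : Ω → T) :
    entropy μ Y' - entropy μ Y ≥
      -Real.logb 2 (∑ y' : T, pr μ (fun ω => Y' ω = y') *
        ∑ y ∈ Finset.univ.filter (fun y : S => 0 < pr μ (fun ω => Y ω = y)),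
          pr μ (fun ω => Y' ω = y' ∧ Y ω = y) / pr μ (fun ω => Y ω = y)) := by
  set p : S → ℝ := fun y => pr μ (fun ω => Y ω = y) with hp
  set q : T → ℝ := fun y' => pr μ (fun ω => Y' ω = y') with hq
  set f : T → S → ℝ := fun y' y => pr μ (fun ω => Y' ω = y' ∧ Y ω = y) with hf
  have fnn : ∀ y' y, 0 ≤ f y' y := fun y' y => pr_nonneg μ _
  have f_le_p : ∀ y' y, f y' y ≤ p y := fun y' y => pr_mono μ (fun ω h => h.2)
  have f_le_q : ∀ y' y, f y' y ≤ q y' := fun y' y => pr_mono μ (fun ω h => h.1)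
  have sum_f_q : ∀ y' : T, ∑ y : S, f y' y = q y' := by
    intro y'
    simp only [hf, hq, pr]
    rw [Finset.sum_comm]
    apply Finset.sum_congr rfl
    intro ω _
    by_cases h : Y' ω = y' <;> simp [h, ite_and, Finset.sum_ite_eq]
  have sum_f_p : ∀ y : S, ∑ y' : T, f y' y = p y := by
    intro y
    simp only [hf, hp, pr]
    rw [Finset.sum_comm]
    apply Finset.sum_congr rfl
    intro ω _
    by_cases h : Y ω = y <;> simp [h, ite_and, Finset.sum_ite_eq]
  set A : Finset (T × S) := Finset.univ.filter (fun z => 0 < f z.1 z.2) with hA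
  have fA : ∀ z : T × S, z ∉ A → f z.1 z.2 = 0 := by
    intro z hz
    have := fnn z.1 z.2
    simp only [hA, Finset.mem_filter, Finset.mem_univ, true_and, not_lt] at hz
    linarith
  have hw1 : ∑ z ∈ A, f z.1 z.2 = 1 := by
    rw [Finset.sum_subset (Finset.subset_univ A) (fun z _ hz => fA z hz)]
    rw [← Finset.univ_product_univ, Finset.sum_product]
    simp only [sum_f_q]
    simp only [hq, pr]
    rw [Finset.sum_comm, ← μ.sum_one]
    apply Finset.sum_congr rfl
    intro ω _
    simp [Finset.sum_ite_eq]
  have collapse_q : ∀ g : T → ℝ, ∑ z ∈ A, f z.1 z.2 * g z.1 = ∑ y' : T, q y' * g y' := by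
    intro g
    rw [Finset.sum_subset (Finset.subset_univ A) (fun z _ hz => by simp [fA z hz])]
    rw [← Finset.univ_product_univ, Finset.sum_product]
    apply Finset.sum_congr rfl
    intro y' _
    dsimp only
    rw [← Finset.sum_mul, sum_f_q]
  have collapse_p : ∀ g : S → ℝ, ∑ z ∈ A, f z.1 z.2 * g z.2 = ∑ y : S, p y * g y := by
    intro g
    rw [Finset.sum_subset (Finset.subset_univ A) (fun z _ hz => by simp [fA z hz])]
    rw [← Finset.univ_product_univ, Finset.sum_product, Finset.sum_comm]
    apply Finset.sum_congr rfl
    intro y _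
    dsimp only
    rw [← Finset.sum_mul, sum_f_p]
  have hpos : ∀ z ∈ A, 0 < p z.2 ∧ 0 < q z.1 := by
    intro z hz
    simp only [hA, Finset.mem_filter, Finset.mem_univ, true_and] at hz
    exact ⟨lt_of_lt_of_le hz (f_le_p _ _), lt_of_lt_of_le hz (f_le_q _ _)⟩
  have hsplit : ∑ z ∈ A, f z.1 z.2 * Real.logb 2 (q z.1 / p z.2) =
      ∑ z ∈ A, f z.1 z.2 * Real.logb 2 (q z.1) -
      ∑ z ∈ A, f z.1 z.2 * Real.logb 2 (p z.2) := by
    rw [← Finset.sum_sub_distrib]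
    apply Finset.sum_congr rfl
    intro z hz
    rw [Real.logb_div (ne_of_gt (hpos z hz).2) (ne_of_gt (hpos z hz).1), mul_sub]
  have hdiff : entropy μ Y' - entropy μ Y =
      -∑ z ∈ A, f z.1 z.2 * Real.logb 2 (q z.1 / p z.2) := by
    rw [entropy_univ, entropy_univ,
      ← collapse_q (fun y' => Real.logb 2 (q y')),
      ← collapse_p (fun y => Real.logb 2 (p y)), hsplit]
    ring
  have hQ : (∑ y' : T, q y' *
        ∑ y ∈ Finset.univ.filter (fun y : S => 0 < p y), f y' y / p y) =
      ∑ z ∈ A, f z.1 z.2 * (q z.1 / p z.2) := by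
    have h1 : (∑ y' : T, q y' *
          ∑ y ∈ Finset.univ.filter (fun y : S => 0 < p y), f y' y / p y) =
        ∑ z ∈ Finset.univ ×ˢ Finset.univ.filter (fun y : S => 0 < p y),
          q z.1 * (f z.1 z.2 / p z.2) := by
      rw [Finset.sum_product]
      apply Finset.sum_congr rfl
      intro y' _
      rw [Finset.mul_sum]
    have hsub : A ⊆ Finset.univ ×ˢ Finset.univ.filter (fun y : S => 0 < p y) := by
      intro z hz
      simp only [Finset.mem_product, Finset.mem_univ, Finset.mem_filter, true_and]
      exact (hpos z hz).1
    have hzero : ∀ z ∈ Finset.univ ×ˢ Finset.univ.filter (fun y : S => 0 < p y),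
        z ∉ A → q z.1 * (f z.1 z.2 / p z.2) = 0 := by
      intro z _ hz
      simp [fA z hz]
    rw [h1, ← Finset.sum_subset hsub hzero]
    apply Finset.sum_congr rfl
    intro z _
    ring
  have hmem : ∀ z ∈ A, q z.1 / p z.2 ∈ Set.Ioi (0 : ℝ) := by
    intro z hz
    exact Set.mem_Ioi.2 (div_pos (hpos z hz).2 (hpos z hz).1)
  have jensen := concaveOn_logb.le_map_sum (t := A) (w := fun z => f z.1 z.2)
    (p := fun z => q z.1 / p z.2) (fun z _ => fnn z.1 z.2) hw1 hmem
  simp only [smul_eq_mul] at jensen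
  rw [hdiff, hQ, ge_iff_le, neg_le_neg_iff]
  exact jensen


end
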